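/- Let ρ : Γ → SL(4,ℝ) be a semisimple group homomorphism such that ρ(a) is conjugate in GL(4,ℝ) to the block-diagonal matrix R ⊕ R, where R is the 2×2 rotation matrix of angle 2π/3. Then there exists a 2-dimensional ρ-invariant linear subspace of ℝ⁴. -/

import Mathlib

open Matrix

/-- The relations of the turnover group `Γ = ⟨a, b ∣ a³ = b³ = (ab)³ = 1⟩`. -/
def turnoverRels : Set (FreeGroup (Fin 2)) :=
  {FreeGroup.of 0 ^ 3, FreeGroup.of 1 ^ 3, (FreeGroup.of 0 * FreeGroup.of 1) ^ 3}

/-- The orbifold fundamental group of the Euclidean turnover `S²(3,3,3)`. -/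
abbrev TurnoverGroup : Type := PresentedGroup turnoverRels

/-- The generator `a` of `Γ`. -/
def ga : TurnoverGroup := PresentedGroup.of 0

/-- A representation `ρ : G → SL(n,ℝ)` is semisimple if `ℝⁿ` is a semisimple module for
the induced `ℝ[G]`-action, i.e. every `ρ`-invariant subspace admits a `ρ`-invariant
complement. -/
def IsSemisimpleRep {n : ℕ} {G : Type*} [Group G]
    (ρ : G →* Matrix.SpecialLinearGroup (Fin n) ℝ) : Prop :=
  ∀ W : Submodule ℝ (Fin n → ℝ),
    (∀ g : G, ∀ w ∈ W, (ρ g : Matrix (Fin n) (Fin n) ℝ) *ᵥ w ∈ W) →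
      ∃ W' : Submodule ℝ (Fin n → ℝ),
        (∀ g : G, ∀ w ∈ W', (ρ g : Matrix (Fin n) (Fin n) ℝ) *ᵥ w ∈ W') ∧ IsCompl W W'

/-- The block-diagonal matrix `R ⊕ R`, where `R` is the rotation of angle `2π/3`. -/
noncomputable def rotRot : Matrix (Fin 4) (Fin 4) ℝ :=
  !![-1/2, -Real.sqrt 3 / 2, 0, 0;
     Real.sqrt 3 / 2, -1/2, 0, 0;
     0, 0, -1/2, -Real.sqrt 3 / 2;
     0, 0, Real.sqrt 3 / 2, -1/2]


/-- If `M*N = 1` and `M` maps `W` into `W`, then so does `N`. -/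
lemma aux_mulVec_inv_mem {n : ℕ} {M N : Matrix (Fin n) (Fin n) ℝ} (h : M * N = 1)
    {W : Submodule ℝ (Fin n → ℝ)} (hW : ∀ w ∈ W, M *ᵥ w ∈ W) :
    ∀ w ∈ W, N *ᵥ w ∈ W := by
  have hNM : N * M = 1 := mul_eq_one_comm.mp h
  have hi : Invertible M := ⟨N, hNM, h⟩
  set e := M.toLinearEquiv' hi with he
  have happ : ∀ v, (e : (Fin n → ℝ) →ₗ[ℝ] (Fin n → ℝ)) v = M *ᵥ v := by
    intro v
    simp [he, Matrix.toLinearEquiv'_apply, Matrix.toLin'_apply]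
  have hmap : W.map (e : (Fin n → ℝ) →ₗ[ℝ] (Fin n → ℝ)) = W := by
    apply Submodule.eq_of_le_of_finrank_eq
    · rintro x ⟨w, hw, rfl⟩
      rw [happ]
      exact hW w hw
    · exact LinearEquiv.finrank_map_eq e W
  intro w hw
  rw [← hmap] at hw
  obtain ⟨u, hu, rfl⟩ := hw
  rw [happ, Matrix.mulVec_mulVec, hNM, Matrix.one_mulVec]
  exact hu

/-- A subspace invariant under a complex structure has even dimension. -/
lemma aux_even_finrank {n : ℕ} {J : Matrix (Fin n) (Fin n) ℝ} (hJ : J * J = -1)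
    {W : Submodule ℝ (Fin n → ℝ)} (hW : ∀ w ∈ W, J *ᵥ w ∈ W) :
    Even (Module.finrank ℝ W) := by
  have hW' : ∀ w ∈ W, J.mulVecLin w ∈ W := by
    intro w hw; rw [Matrix.mulVecLin_apply]; exact hW w hw
  set f : W →ₗ[ℝ] W := (J.mulVecLin).restrict hW' with hf
  have hff : f ∘ₗ f = -LinearMap.id := by
    ext w
    have h2 : J *ᵥ (J *ᵥ (w : Fin n → ℝ)) = -(w : Fin n → ℝ) := by
      rw [Matrix.mulVec_mulVec, hJ, Matrix.neg_mulVec, Matrix.one_mulVec]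
    simp [hf, LinearMap.restrict_apply, Matrix.mulVecLin_apply, h2]
  have hdet : LinearMap.det f * LinearMap.det f = (-1 : ℝ) ^ Module.finrank ℝ W := by
    have hneg : (-LinearMap.id : W →ₗ[ℝ] W) = (-1 : ℝ) • LinearMap.id := by
      ext w; simp
    rw [← LinearMap.det_comp, hff, hneg, LinearMap.det_smul, LinearMap.det_id, mul_one]
  rcases Nat.even_or_odd (Module.finrank ℝ W) with h | h
  · exact h
  · exfalso
    rw [h.neg_one_pow] at hdet
    nlinarith [hdet]

lemma aux_plane_of_commuting {J S : Matrix (Fin 4) (Fin 4) ℝ} (hJ : J * J = -1)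
    (hc : S * J = J * S) :
    ∃ W : Submodule ℝ (Fin 4 → ℝ), (∀ w ∈ W, J *ᵥ w ∈ W) ∧ (∀ w ∈ W, S *ᵥ w ∈ W) ∧
      Module.finrank ℝ W = 2 := by
  classical
  have hJJ : ∀ v : Fin 4 → ℝ, J *ᵥ (J *ᵥ v) = -v := by
    intro v; rw [Matrix.mulVec_mulVec, hJ, Matrix.neg_mulVec, Matrix.one_mulVec]
  have hSJ : ∀ v : Fin 4 → ℝ, S *ᵥ (J *ᵥ v) = J *ᵥ (S *ᵥ v) := by
    intro v; rw [Matrix.mulVec_mulVec, hc, ← Matrix.mulVec_mulVec]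
  letI : SMul ℂ (Fin 4 → ℝ) := ⟨fun z v => z.re • v + z.im • (J *ᵥ v)⟩
  have hsmul : ∀ (z : ℂ) (v : Fin 4 → ℝ), z • v = z.re • v + z.im • (J *ᵥ v) := fun _ _ => rfl
  letI : Module ℂ (Fin 4 → ℝ) := Module.ofMinimalAxioms
    (by intro z u v
        rw [hsmul, hsmul, hsmul]
        simp only [Matrix.mulVec_add]
        module)
    (by intro z w v
        rw [hsmul, hsmul, hsmul]
        simp only [Complex.add_re, Complex.add_im]
        module)
    (by intro z w v
        rw [hsmul, hsmul, hsmul]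
        simp only [Matrix.mulVec_add, Matrix.mulVec_smul, hJJ, Complex.mul_re, Complex.mul_im]
        module)
    (by intro v
        rw [hsmul]
        simp)
  letI : IsScalarTower ℝ ℂ (Fin 4 → ℝ) := ⟨by
    intro r z v
    rw [hsmul, hsmul]
    simp only [Complex.smul_re, Complex.smul_im, smul_eq_mul]
    module⟩
  letI : FiniteDimensional ℂ (Fin 4 → ℝ) := Module.Finite.of_restrictScalars_finite ℝ ℂ _
  set f : Module.End ℂ (Fin 4 → ℝ) :=
    { toFun := fun v => S *ᵥ v
      map_add' := fun u v => Matrix.mulVec_add S u v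
      map_smul' := by
        intro z v
        simp only [RingHom.id_apply]
        rw [hsmul, hsmul]
        simp only [Matrix.mulVec_add, Matrix.mulVec_smul, hSJ] } with hfdef
  obtain ⟨μ, hμ⟩ := Module.End.exists_eigenvalue f
  obtain ⟨v, hv⟩ := hμ.exists_hasEigenvector
  have hv0 : v ≠ 0 := hv.right
  have hfv : S *ᵥ v = μ.re • v + μ.im • (J *ᵥ v) := by
    rw [← hsmul]
    exact hv.apply_eq_smul
  set W : Submodule ℝ (Fin 4 → ℝ) := Submodule.span ℝ {v, J *ᵥ v} with hWdef
  have hvW : v ∈ W := Submodule.subset_span (by left; rfl)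
  have hJvW : J *ᵥ v ∈ W := Submodule.subset_span (by right; rfl)
  have hWJ : ∀ w ∈ W, J *ᵥ w ∈ W := by
    have hle : W ≤ W.comap J.mulVecLin := by
      rw [hWdef, Submodule.span_le]
      intro x hx
      simp only [Set.mem_insert_iff, Set.mem_singleton_iff] at hx
      rcases hx with h | h <;> rw [h]
      · show v ∈ W.comap J.mulVecLin
        rw [Submodule.mem_comap, Matrix.mulVecLin_apply]
        exact hJvW
      · show (J *ᵥ v) ∈ W.comap J.mulVecLin
        rw [Submodule.mem_comap, Matrix.mulVecLin_apply, hJJ]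
        exact W.neg_mem hvW
    intro w hw
    have := hle hw
    rw [Submodule.mem_comap, Matrix.mulVecLin_apply] at this
    exact this
  have hSvW : S *ᵥ v ∈ W := by
    rw [hfv]
    exact W.add_mem (W.smul_mem _ hvW) (W.smul_mem _ hJvW)
  have hWS : ∀ w ∈ W, S *ᵥ w ∈ W := by
    have hle : W ≤ W.comap S.mulVecLin := by
      rw [hWdef, Submodule.span_le]
      intro x hx
      simp only [Set.mem_insert_iff, Set.mem_singleton_iff] at hx
      rcases hx with h | h <;> rw [h]
      · show v ∈ W.comap S.mulVecLin
        rw [Submodule.mem_comap, Matrix.mulVecLin_apply]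
        exact hSvW
      · show (J *ᵥ v) ∈ W.comap S.mulVecLin
        rw [Submodule.mem_comap, Matrix.mulVecLin_apply, hSJ]
        exact hWJ _ hSvW
    intro w hw
    have := hle hw
    rw [Submodule.mem_comap, Matrix.mulVecLin_apply] at this
    exact this
  refine ⟨W, hWJ, hWS, ?_⟩
  have hupper : Module.finrank ℝ W ≤ 2 := by
    have hcard : ({v, J *ᵥ v} : Set (Fin 4 → ℝ)).toFinset.card ≤ 2 := by
      rw [Set.toFinset_insert, Set.toFinset_singleton]
      exact (Finset.card_insert_le _ _).trans (by simp)
    exact (finrank_span_le_card _).trans hcard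
  have heven : Even (Module.finrank ℝ W) := aux_even_finrank hJ hWJ
  have h0 : Module.finrank ℝ W ≠ 0 := by
    intro h
    rw [Submodule.finrank_eq_zero] at h
    rw [h] at hvW
    exact hv0 (Submodule.mem_bot ℝ |>.mp hvW)
  obtain ⟨k, hk⟩ := heven
  omega

lemma aux_plane_of_PQ {J S P Q : Matrix (Fin 4) (Fin 4) ℝ} (hJ : J * J = -1)
    (hSPQ : S = P + Q) (hPJ : P * J = J * P) (hQJ : Q * J = -(J * Q))
    (hPQ : P * Q = Q * P) (hQQ : Q * Q = 0) :
    ∃ W : Submodule ℝ (Fin 4 → ℝ), (∀ w ∈ W, J *ᵥ w ∈ W) ∧ (∀ w ∈ W, S *ᵥ w ∈ W) ∧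
      Module.finrank ℝ W = 2 := by
  by_cases hQ0 : Q = 0
  · apply aux_plane_of_commuting hJ
    rw [hSPQ, hQ0, add_zero]
    exact hPJ
  · set W := LinearMap.ker Q.mulVecLin with hWdef
    have hmem : ∀ w, w ∈ W ↔ Q *ᵥ w = 0 := fun w => by
      rw [hWdef, LinearMap.mem_ker, Matrix.mulVecLin_apply]
    have hWJ : ∀ w ∈ W, J *ᵥ w ∈ W := by
      intro w hw
      rw [hmem] at hw ⊢
      rw [Matrix.mulVec_mulVec, hQJ, Matrix.neg_mulVec, ← Matrix.mulVec_mulVec, hw,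
        Matrix.mulVec_zero, neg_zero]
    have hWS : ∀ w ∈ W, S *ᵥ w ∈ W := by
      intro w hw
      rw [hmem] at hw ⊢
      have hQS : Q * S = P * Q := by rw [hSPQ, mul_add, hQQ, add_zero, hPQ]
      rw [Matrix.mulVec_mulVec, hQS, ← Matrix.mulVec_mulVec, hw, Matrix.mulVec_zero]
    refine ⟨W, hWJ, hWS, ?_⟩
    have hv : ∃ v, Q *ᵥ v ≠ 0 := by
      by_contra h
      push_neg at h
      apply hQ0
      ext i j
      have := congrFun (h (Pi.single j 1)) i
      simpa [Matrix.mulVec_single] using this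
    obtain ⟨v, hv⟩ := hv
    have hQvW : Q *ᵥ v ∈ W := by
      rw [hmem, Matrix.mulVec_mulVec, hQQ, Matrix.zero_mulVec]
    have h0 : Module.finrank ℝ W ≠ 0 := by
      intro h
      rw [Submodule.finrank_eq_zero] at h
      rw [h] at hQvW
      exact hv (Submodule.mem_bot ℝ |>.mp hQvW)
    have hlt : Module.finrank ℝ W < 4 := by
      have hne : W < ⊤ := lt_top_iff_ne_top.mpr (fun h => hv ((hmem v).mp (h ▸ Submodule.mem_top)))
      have := Submodule.finrank_lt (K := ℝ) (V := Fin 4 → ℝ) hne.ne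
      simpa [Module.finrank_fin_fun] using this
    obtain ⟨k, hk⟩ := aux_even_finrank hJ hWJ
    omega

lemma aux_keyE1 {R : Type*} [Ring R] (A S : R) (hA : A * A = -A - 1) :
    (36:ℤ) • (S * (A*S*(A*A)) - (A*S*(A*A)) * S) =
      (A*A - 1) * (((3:ℤ)•S - (A+A+1)*S*(A+A+1))*((3:ℤ)•S + (A+A+1)*S*(A+A+1))
        - ((3:ℤ)•S + (A+A+1)*S*(A+A+1))*((3:ℤ)•S - (A+A+1)*S*(A+A+1)))
      + (A+A+1) * (((3:ℤ)•S + (A+A+1)*S*(A+A+1))*((3:ℤ)•S + (A+A+1)*S*(A+A+1))) := by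
  have h2 : ∀ x : R, A * (A * x) = -(A*x) - x := fun x => by
    rw [← mul_assoc, hA, sub_mul, neg_mul, one_mul]
  simp only [mul_add, add_mul, mul_sub, sub_mul, mul_neg, neg_mul, neg_neg,
    smul_mul_assoc, mul_smul_comm, mul_one, one_mul, mul_assoc, h2, hA]
  abel

lemma aux_keyE2 {R : Type*} [Ring R] (A S : R) (hA : A * A = -A - 1) :
    (12:ℤ) • ((A+A+1) * (S * (A*S*(A*A)) - (A*S*(A*A)) * S) * (A+A+1)) =
      (A*A - 1) * (((3:ℤ)•S - (A+A+1)*S*(A+A+1))*((3:ℤ)•S + (A+A+1)*S*(A+A+1))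
        - ((3:ℤ)•S + (A+A+1)*S*(A+A+1))*((3:ℤ)•S - (A+A+1)*S*(A+A+1)))
      - (A+A+1) * (((3:ℤ)•S + (A+A+1)*S*(A+A+1))*((3:ℤ)•S + (A+A+1)*S*(A+A+1))) := by
  have h2 : ∀ x : R, A * (A * x) = -(A*x) - x := fun x => by
    rw [← mul_assoc, hA, sub_mul, neg_mul, one_mul]
  simp only [mul_add, add_mul, mul_sub, sub_mul, mul_neg, neg_mul, neg_neg,
    smul_mul_assoc, mul_smul_comm, mul_one, one_mul, mul_assoc, h2, hA]
  abel

lemma aux_rel (r : FreeGroup (Fin 2)) (hr : r ∈ turnoverRels) :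
    PresentedGroup.mk turnoverRels r = 1 :=
  (QuotientGroup.eq_one_iff r).mpr (Subgroup.subset_normalClosure hr)

lemma aux_ga3 : ga ^ 3 = 1 := by
  have h : ga ^ 3 = PresentedGroup.mk turnoverRels (FreeGroup.of 0 ^ 3) := by
    rw [map_pow]; rfl
  rw [h]
  exact aux_rel _ (by simp [turnoverRels])

lemma aux_gb3 : (PresentedGroup.of 1 : TurnoverGroup) ^ 3 = 1 := by
  have h : (PresentedGroup.of 1 : TurnoverGroup) ^ 3
      = PresentedGroup.mk turnoverRels (FreeGroup.of 1 ^ 3) := by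
    rw [map_pow]; rfl
  rw [h]
  exact aux_rel _ (by simp [turnoverRels])

lemma aux_gagb3 : (ga * (PresentedGroup.of 1 : TurnoverGroup)) ^ 3 = 1 := by
  have h : ga * (PresentedGroup.of 1 : TurnoverGroup)
      = PresentedGroup.mk turnoverRels (FreeGroup.of 0 * FreeGroup.of 1) := by
    rw [_root_.map_mul]; rfl
  rw [h, ← _root_.map_pow]
  exact aux_rel _ (by simp [turnoverRels])

lemma aux_rotRot_sq : rotRot * rotRot = -rotRot - 1 := by
  have hs : Real.sqrt 3 * Real.sqrt 3 = 3 := Real.mul_self_sqrt (by norm_num)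
  ext i j
  fin_cases i <;> fin_cases j <;>
    simp [rotRot, Matrix.mul_apply, Fin.sum_univ_four, Matrix.one_apply,
      Matrix.cons_val_zero, Matrix.cons_val_one, Matrix.head_cons, Matrix.head_fin_const,
      Matrix.cons_val_succ, Matrix.vecHead, Matrix.vecTail] <;>
    nlinarith [hs]

/-- A semisimple representation `ρ : Γ → SL(4,ℝ)` of the turnover group with `ρ(a)`
conjugate to `R ⊕ R` admits a `2`-dimensional invariant subspace. -/
theorem invariant_plane_of_rotRot
    (ρ : TurnoverGroup →* Matrix.SpecialLinearGroup (Fin 4) ℝ)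
    (hss : IsSemisimpleRep ρ)
    (hconj : ∃ g : GL (Fin 4) ℝ,
      (g : Matrix (Fin 4) (Fin 4) ℝ) * (ρ ga : Matrix (Fin 4) (Fin 4) ℝ) *
        ((g⁻¹ : GL (Fin 4) ℝ) : Matrix (Fin 4) (Fin 4) ℝ) = rotRot) :
    ∃ W : Submodule ℝ (Fin 4 → ℝ),
      (∀ γ : TurnoverGroup, ∀ w ∈ W, (ρ γ : Matrix (Fin 4) (Fin 4) ℝ) *ᵥ w ∈ W) ∧
      Module.finrank ℝ W = 2 := by
  obtain ⟨g, hg⟩ := hconj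
  set gb : TurnoverGroup := PresentedGroup.of 1 with hgbdef
  set A : Matrix (Fin 4) (Fin 4) ℝ := (ρ ga : Matrix (Fin 4) (Fin 4) ℝ) with hAdef
  set B : Matrix (Fin 4) (Fin 4) ℝ := (ρ gb : Matrix (Fin 4) (Fin 4) ℝ) with hBdef
  -- the relations, at the matrix level
  have hA3 : A * A * A = 1 := by
    have h1 : (ρ ga) ^ 3 = 1 := by rw [← _root_.map_pow, aux_ga3, _root_.map_one]
    have h2 : A ^ 3 = 1 := by
      rw [hAdef, ← Matrix.SpecialLinearGroup.coe_pow, h1, Matrix.SpecialLinearGroup.coe_one]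
    rw [← h2, pow_succ, pow_succ, pow_one]
  have hB3 : B * B * B = 1 := by
    have h1 : (ρ gb) ^ 3 = 1 := by rw [← _root_.map_pow, hgbdef, aux_gb3, _root_.map_one]
    have h2 : B ^ 3 = 1 := by
      rw [hBdef, ← Matrix.SpecialLinearGroup.coe_pow, h1, Matrix.SpecialLinearGroup.coe_one]
    rw [← h2, pow_succ, pow_succ, pow_one]
  have hAB3 : (A * B) * (A * B) * (A * B) = 1 := by
    have h1 : (ρ ga * ρ gb) ^ 3 = 1 := by
      rw [← _root_.map_mul, ← _root_.map_pow, hgbdef, aux_gagb3, _root_.map_one]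
    have h2 : (A * B) ^ 3 = 1 := by
      rw [hAdef, hBdef, ← Matrix.SpecialLinearGroup.coe_mul, ← Matrix.SpecialLinearGroup.coe_pow,
        h1, Matrix.SpecialLinearGroup.coe_one]
    rw [← h2, pow_succ, pow_succ, pow_one]
  have hA3' : ∀ x : Matrix (Fin 4) (Fin 4) ℝ, A*(A*(A*x)) = x := fun x => by
    rw [← mul_assoc, ← mul_assoc, hA3, one_mul]
  have hA3R : A*(A*A) = 1 := by rw [← mul_assoc]; exact hA3
  have hB3' : ∀ x : Matrix (Fin 4) (Fin 4) ℝ, B*(B*(B*x)) = x := fun x => by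
    rw [← mul_assoc, ← mul_assoc, hB3, one_mul]
  have hAB3R : A*(B*(A*(B*(A*B)))) = 1 := by
    rw [show A*(B*(A*(B*(A*B)))) = (A*B)*(A*B)*(A*B) by simp only [mul_assoc]]
    exact hAB3
  have hAB3' : ∀ x : Matrix (Fin 4) (Fin 4) ℝ, A*(B*(A*(B*(A*(B*x))))) = x := fun x => by
    rw [show A*(B*(A*(B*(A*(B*x))))) = (A*(B*(A*(B*(A*B)))))*x by simp only [mul_assoc],
      hAB3R, one_mul]
  have h2'' : B*(A*(B*(A*B))) = A*A := by
    calc B*(A*(B*(A*B))) = A*(A*(A*(B*(A*(B*(A*B)))))) := (hA3' _).symm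
      _ = A*(A*1) := by rw [hAB3R]
      _ = A*A := by rw [mul_one]
  have h2' : ∀ x : Matrix (Fin 4) (Fin 4) ℝ, B*(A*(B*(A*(B*x)))) = A*(A*x) := fun x => by
    calc B*(A*(B*(A*(B*x)))) = A*(A*(A*(B*(A*(B*(A*(B*x))))))) := (hA3' _).symm
      _ = A*(A*x) := by rw [hAB3' x]
  set S : Matrix (Fin 4) (Fin 4) ℝ := A*(B*B) with hSdef
  set T : Matrix (Fin 4) (Fin 4) ℝ := A*S*(A*A) with hTdef
  have hTeq : T = B*(A*B) := by
    rw [hTdef, hSdef]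
    calc A*(A*(B*B))*(A*A) = A*(A*(B*(B*(A*A)))) := by simp only [mul_assoc]
      _ = A*(A*(B*(B*(B*(A*(B*(A*B))))))) := by rw [← h2'']
      _ = A*(A*(A*(B*(A*B)))) := by rw [hB3']
      _ = B*(A*B) := hA3' _
  have hST : S * T = T * S := by
    have e1 : S * T = A*(A*B) := by
      rw [hTeq, hSdef]
      calc A*(B*B)*(B*(A*B)) = A*(B*(B*(B*(A*B)))) := by simp only [mul_assoc]
        _ = A*(A*B) := by rw [hB3']
    have e2 : T * S = A*(A*B) := by
      rw [hTeq, hSdef]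
      calc (B*(A*B))*(A*(B*B)) = B*(A*(B*(A*(B*B)))) := by simp only [mul_assoc]
        _ = A*(A*B) := h2' B
    rw [e1, e2]
  -- A² + A + 1 = 0 from the conjugacy
  have hA2 : A * A = -A - 1 := by
    set gm : Matrix (Fin 4) (Fin 4) ℝ := (g : Matrix (Fin 4) (Fin 4) ℝ) with hgm
    set gi : Matrix (Fin 4) (Fin 4) ℝ := ((g⁻¹ : GL (Fin 4) ℝ) : Matrix (Fin 4) (Fin 4) ℝ) with hgi
    have h1 : gm * gi = 1 := g.mul_inv
    have h2 : gi * gm = 1 := g.inv_mul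
    have hgiA : A = gi * rotRot * gm := by
      calc A = 1 * A * 1 := by rw [one_mul, mul_one]
        _ = (gi * gm) * A * (gi * gm) := by rw [h2]
        _ = gi * (gm * A * gi) * gm := by simp only [mul_assoc]
        _ = gi * rotRot * gm := by rw [hg]
    rw [hgiA]
    calc (gi * rotRot * gm) * (gi * rotRot * gm)
        = gi * (rotRot * ((gm * gi) * (rotRot * gm))) := by simp only [mul_assoc]
      _ = gi * ((rotRot * rotRot) * gm) := by rw [h1, one_mul]; simp only [mul_assoc]
      _ = gi * ((-rotRot - 1) * gm) := by rw [aux_rotRot_sq]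
      _ = -(gi * rotRot * gm) - 1 := by
          rw [sub_mul, neg_mul, one_mul, mul_sub, mul_neg, h2, mul_assoc]
  set Jp : Matrix (Fin 4) (Fin 4) ℝ := A + A + 1 with hJpdef
  set K : Matrix (Fin 4) (Fin 4) ℝ := Jp * S * Jp with hKdef
  set p : Matrix (Fin 4) (Fin 4) ℝ := (3:ℤ)•S - K with hpdef
  set q : Matrix (Fin 4) (Fin 4) ℝ := (3:ℤ)•S + K with hqdef
  have hJp2 : Jp * Jp = -((3:ℝ)•(1 : Matrix (Fin 4) (Fin 4) ℝ)) := by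
    rw [hJpdef]
    simp only [add_mul, mul_add, mul_one, one_mul, hA2]
    module
  have hE1 : (36:ℤ) • (S * T - T * S) = (A*A - 1) * (p*q - q*p) + Jp * (q*q) := by
    have h := aux_keyE1 A S hA2
    rw [← hJpdef, ← hKdef, ← hpdef, ← hqdef, ← hTdef] at h
    exact h
  have hE2 : (12:ℤ) • (Jp * (S * T - T * S) * Jp) = (A*A - 1) * (p*q - q*p) - Jp * (q*q) := by
    have h := aux_keyE2 A S hA2
    rw [← hJpdef, ← hKdef, ← hpdef, ← hqdef, ← hTdef] at h
    exact h
  have hST0 : S * T - T * S = 0 := sub_eq_zero_of_eq hST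
  rw [hST0, smul_zero] at hE1
  rw [hST0, mul_zero, zero_mul, smul_zero] at hE2
  have hX : (A*A - 1) * (p*q - q*p) = 0 := by
    have h : (2:ℝ) • ((A*A - 1) * (p*q - q*p)) = 0 := by
      rw [two_smul]
      calc (A*A - 1) * (p*q - q*p) + (A*A - 1) * (p*q - q*p)
          = ((A*A - 1) * (p*q - q*p) + Jp * (q*q))
            + ((A*A - 1) * (p*q - q*p) - Jp * (q*q)) := by abel
        _ = 0 := by rw [← hE1, ← hE2, add_zero]
    exact (smul_eq_zero.mp h).resolve_left two_ne_zero
  have hY : Jp * (q*q) = 0 := by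
    have h : (2:ℝ) • (Jp * (q*q)) = 0 := by
      rw [two_smul]
      calc Jp * (q*q) + Jp * (q*q)
          = ((A*A - 1) * (p*q - q*p) + Jp * (q*q))
            - ((A*A - 1) * (p*q - q*p) - Jp * (q*q)) := by abel
        _ = 0 := by rw [← hE1, ← hE2, sub_zero]
    exact (smul_eq_zero.mp h).resolve_left two_ne_zero
  have hqq : q * q = 0 := by
    have h : Jp * (Jp * (q*q)) = 0 := by rw [hY, mul_zero]
    rw [← mul_assoc, hJp2, neg_mul, smul_mul_assoc, one_mul, neg_eq_zero] at h
    exact (smul_eq_zero.mp h).resolve_left (by norm_num)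
  have hpq : p * q = q * p := by
    have h1A : (1 - A) * (A*A - 1) = -((3:ℝ)•(1 : Matrix (Fin 4) (Fin 4) ℝ)) := by
      simp only [sub_mul, mul_sub, one_mul, mul_one, mul_add, mul_neg, hA2]
      module
    have h : (1 - A) * ((A*A - 1) * (p*q - q*p)) = 0 := by rw [hX, mul_zero]
    rw [← mul_assoc, h1A, neg_mul, smul_mul_assoc, one_mul, neg_eq_zero] at h
    have h' := (smul_eq_zero.mp h).resolve_left (by norm_num : (3:ℝ) ≠ 0)
    exact sub_eq_zero.mp h'
  -- pass to real scalars and the normalized complex structure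
  have hz3 : ((3:ℤ)•S : Matrix (Fin 4) (Fin 4) ℝ) = (3:ℝ)•S := by
    rw [← Int.cast_smul_eq_zsmul ℝ]; norm_num
  have hc2 : Real.sqrt 3 * Real.sqrt 3 = 3 := Real.mul_self_sqrt (by norm_num)
  have hc0 : Real.sqrt 3 ≠ 0 := ne_of_gt (Real.sqrt_pos.mpr (by norm_num))
  set J : Matrix (Fin 4) (Fin 4) ℝ := (Real.sqrt 3)⁻¹ • Jp with hJdef
  have hJ2 : J * J = -1 := by
    rw [hJdef, smul_mul_assoc, mul_smul_comm, hJp2]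
    simp only [smul_neg, smul_smul]
    rw [show (Real.sqrt 3)⁻¹ * ((Real.sqrt 3)⁻¹ * 3) = 1 by field_simp; rw [Real.sq_sqrt (by norm_num)]]
    rw [one_smul]
  set P : Matrix (Fin 4) (Fin 4) ℝ := (6:ℝ)⁻¹ • ((3:ℝ)•S - K) with hPdef
  set Q : Matrix (Fin 4) (Fin 4) ℝ := (6:ℝ)⁻¹ • ((3:ℝ)•S + K) with hQdef
  have hpR : (3:ℝ)•S - K = p := by rw [hpdef, hz3]
  have hqR : (3:ℝ)•S + K = q := by rw [hqdef, hz3]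
  have hSPQ : S = P + Q := by
    rw [hPdef, hQdef, ← smul_add]
    rw [show ((3:ℝ)•S - K) + ((3:ℝ)•S + K) = (6:ℝ)•S by module]
    rw [smul_smul]; norm_num
  have hJp2' : ∀ x : Matrix (Fin 4) (Fin 4) ℝ, Jp*(Jp*x) = -((3:ℝ)•x) := fun x => by
    rw [← mul_assoc, hJp2, neg_mul, smul_mul_assoc, one_mul]
  have hpJp : ((3:ℝ)•S - K) * Jp = Jp * ((3:ℝ)•S - K) := by
    rw [hKdef]
    simp only [sub_mul, mul_sub, smul_mul_assoc, mul_smul_comm, mul_assoc, hJp2', hJp2,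
      mul_neg, mul_one, neg_neg]
    module
  have hqJp : ((3:ℝ)•S + K) * Jp = -(Jp * ((3:ℝ)•S + K)) := by
    rw [hKdef]
    simp only [add_mul, mul_add, smul_mul_assoc, mul_smul_comm, mul_assoc, hJp2', hJp2,
      mul_neg, mul_one, neg_neg]
    module
  have hPJ : P * J = J * P := by
    rw [hPdef, hJdef, smul_mul_assoc, mul_smul_comm, smul_mul_assoc, mul_smul_comm, hpJp,
      smul_smul, smul_smul, mul_comm ((6:ℝ)⁻¹) ((Real.sqrt 3)⁻¹)]
  have hQJ : Q * J = -(J * Q) := by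
    rw [hQdef, hJdef, smul_mul_assoc, mul_smul_comm, smul_mul_assoc, mul_smul_comm, hqJp,
      smul_neg, smul_neg, smul_smul, smul_smul, mul_comm ((6:ℝ)⁻¹) ((Real.sqrt 3)⁻¹)]
  have hPQc : P * Q = Q * P := by
    rw [hPdef, hQdef]
    simp only [smul_mul_assoc, mul_smul_comm]
    rw [hpR, hqR, hpq]
  have hQQ0 : Q * Q = 0 := by
    rw [hQdef]
    simp only [smul_mul_assoc, mul_smul_comm]
    rw [hqR, hqq, smul_zero, smul_zero]
  obtain ⟨W, hWJ, hWS, hWdim⟩ := aux_plane_of_PQ hJ2 hSPQ hPJ hQJ hPQc hQQ0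
  have hWA : ∀ w ∈ W, A *ᵥ w ∈ W := by
    have hAex : A = (2:ℝ)⁻¹ • ((Real.sqrt 3) • J + (-1:ℝ) • 1) := by
      rw [hJdef, smul_smul, mul_inv_cancel₀ hc0, one_smul, hJpdef]
      module
    intro w hw
    rw [hAex]
    simp only [Matrix.add_mulVec, Matrix.smul_mulVec, Matrix.one_mulVec]
    exact W.smul_mem _ (W.add_mem (W.smul_mem _ (hWJ w hw)) (W.smul_mem _ hw))
  have hSBA : S * (B*(A*A)) = 1 := by
    rw [hSdef]
    calc A*(B*B)*(B*(A*A)) = A*(B*(B*(B*(A*A)))) := by simp only [mul_assoc]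
      _ = A*(A*A) := by rw [hB3']
      _ = 1 := hA3R
  have hWB : ∀ w ∈ W, B *ᵥ w ∈ W := by
    intro w hw
    have hBeq : (B*(A*A))*A = B := by
      rw [mul_assoc, hA3, mul_one]
    rw [← hBeq, ← Matrix.mulVec_mulVec]
    exact aux_mulVec_inv_mem hSBA hWS _ (hWA w hw)
  refine ⟨W, ?_, hWdim⟩
  set H : Subgroup TurnoverGroup :=
    { carrier := {γ | ∀ w ∈ W, (ρ γ : Matrix (Fin 4) (Fin 4) ℝ) *ᵥ w ∈ W}
      one_mem' := by
        intro w hw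
        rw [_root_.map_one, Matrix.SpecialLinearGroup.coe_one, Matrix.one_mulVec]
        exact hw
      mul_mem' := by
        intro x y hx hy w hw
        rw [_root_.map_mul, Matrix.SpecialLinearGroup.coe_mul, ← Matrix.mulVec_mulVec]
        exact hx _ (hy w hw)
      inv_mem' := by
        intro x hx
        have h1 : (ρ x : Matrix (Fin 4) (Fin 4) ℝ) * (ρ x⁻¹ : Matrix (Fin 4) (Fin 4) ℝ) = 1 := by
          rw [← Matrix.SpecialLinearGroup.coe_mul, ← _root_.map_mul, mul_inv_cancel,
            _root_.map_one, Matrix.SpecialLinearGroup.coe_one]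
        exact aux_mulVec_inv_mem h1 hx } with hHdef
  intro γ
  exact PresentedGroup.generated_by _ H (by
    intro j
    fin_cases j
    · exact hWA
    · exact hWB) γ
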